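/- Let E be a real Banach space and let A be the generator of a uniformly bounded strongly continuous semigroup S on E with M = sup_{t≥0} ‖S_t‖. Then every λ > 0 lies in the resolvent set of A and the resolvent satisfies ‖(λ·Id − A)^(−k)‖ ≤ M/λ^k for all k ∈ ℕ. -/

import Mathlib

open Filter Topology MeasureTheory Set

/-- Feller–Miyadera–Phillips resolvent estimate: if `A` generates a uniformly bounded
strongly continuous semigroup `S` on a real Banach space `E` with `‖S_t‖ ≤ M`, then every
`λ > 0` lies in the resolvent set of `A` and `‖(λ·Id − A)^{−k}‖ ≤ M / λ^k` for all `k ≥ 1`. -/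
theorem resolvent_bound_of_bounded_semigroup {E : Type*} [NormedAddCommGroup E]
    [NormedSpace ℝ E] [CompleteSpace E]
    (S : ℝ → E →L[ℝ] E) (M : ℝ)
    (hS0 : S 0 = 1)
    (hSadd : ∀ s t : ℝ, 0 ≤ s → 0 ≤ t → S (s + t) = (S s).comp (S t))
    (hScont : ∀ x : E, ContinuousOn (fun t => S t x) (Set.Ici (0:ℝ)))
    (hM : ∀ t : ℝ, 0 ≤ t → ‖S t‖ ≤ M)
    (D : Set E) (A : E → E)
    (hgen : ∀ (x : E) (L : E), (x ∈ D ∧ A x = L) ↔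
      Tendsto (fun t : ℝ => t⁻¹ • (S t x - x)) (𝓝[>] (0:ℝ)) (𝓝 L)) :
    ∀ l : ℝ, 0 < l → ∃ R : E →L[ℝ] E,
      (∀ x ∈ D, R (l • x - A x) = x) ∧
      (∀ y : E, R y ∈ D ∧ l • R y - A (R y) = y) ∧
      (∀ k : ℕ, 1 ≤ k → ‖(R ^ k : E →L[ℝ] E)‖ ≤ M / l ^ k) := by
  intro l hl
  have hM0 : 0 ≤ M := le_trans (norm_nonneg _) (hM 0 le_rfl)
  set f : E → ℝ → E := fun y u => Real.exp (-l * u) • S u y with hfdef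
  have hexp_cont : Continuous fun u : ℝ => Real.exp (-l * u) := by continuity
  have hfc : ∀ y, ContinuousOn (f y) (Ici 0) := fun y =>
    hexp_cont.continuousOn.smul (hScont y)
  have hfm : ∀ y, AEStronglyMeasurable (f y) (volume.restrict (Ioi 0)) := fun y =>
    ((hfc y).mono Ioi_subset_Ici_self).aestronglyMeasurable measurableSet_Ioi
  have hexp_int : IntegrableOn (fun u => Real.exp (-l * u)) (Ioi 0) :=
    exp_neg_integrableOn_Ioi 0 hl
  have hSy_bound : ∀ (y : E) t, 0 ≤ t → ‖S t y‖ ≤ M * ‖y‖ := fun y t ht =>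
    le_trans ((S t).le_opNorm y) (mul_le_mul_of_nonneg_right (hM t ht) (norm_nonneg y))
  have hbound : ∀ (g : ℝ → E) (C : ℝ), (∀ u, 0 < u → ‖g u‖ ≤ C) →
      ∀ᵐ u ∂(volume.restrict (Ioi 0)), ‖Real.exp (-l * u) • g u‖ ≤ Real.exp (-l * u) * C := by
    intro g C hC
    filter_upwards [ae_restrict_mem measurableSet_Ioi] with u hu
    rw [norm_smul, Real.norm_eq_abs, abs_of_pos (Real.exp_pos _)]
    exact mul_le_mul_of_nonneg_left (hC u hu) (Real.exp_pos _).le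
  have hfi : ∀ y, IntegrableOn (f y) (Ioi 0) := by
    intro y
    refine Integrable.mono (hexp_int.mul_const (M * ‖y‖)) (hfm y) ?_
    filter_upwards [hbound (fun u => S u y) (M * ‖y‖)
      (fun u hu => hSy_bound y u hu.le)] with u hu
    refine hu.trans (le_abs_self _)
  have hexp_val : (∫ u in Ioi (0:ℝ), Real.exp (-l * u)) = l⁻¹ := by
    have hderiv : ∀ x ∈ Ioi (0:ℝ),
        HasDerivAt (fun u => -l⁻¹ * Real.exp (-l * u)) (Real.exp (-l * x)) x := by
      intro x _
      have h1 : HasDerivAt (fun u : ℝ => -l * u) (-l) x := by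
        simpa using (hasDerivAt_id x).const_mul (-l)
      have h2 := ((Real.hasDerivAt_exp (-l * x)).comp x h1).const_mul (-l⁻¹)
      rw [mul_comm (Real.exp _) (-l), ← mul_assoc, neg_mul_neg, inv_mul_cancel₀ hl.ne', one_mul] at h2
      exact h2
    have hc : ContinuousWithinAt (fun u => -l⁻¹ * Real.exp (-l * u)) (Ici 0) 0 :=
      (continuous_const.mul hexp_cont).continuousWithinAt
    have htend : Tendsto (fun u => -l⁻¹ * Real.exp (-l * u)) atTop (𝓝 0) := by
      rw [show (0:ℝ) = -l⁻¹ * 0 by ring]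
      refine Tendsto.const_mul _ (Real.tendsto_exp_atBot.comp ?_)
      exact (tendsto_const_mul_atBot_of_neg (neg_lt_zero.mpr hl)).mpr tendsto_id
    have := integral_Ioi_of_hasDerivAt_of_tendsto hc hderiv hexp_int htend
    simpa using this
  -- the resolvent as a linear map
  have hmap_add : ∀ y z : E, (∫ u in Ioi (0:ℝ), f (y + z) u)
      = (∫ u in Ioi (0:ℝ), f y u) + ∫ u in Ioi (0:ℝ), f z u := by
    intro y z
    rw [← integral_add (hfi y) (hfi z)]
    refine integral_congr_ae (Eventually.of_forall fun u => ?_)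
    show Real.exp (-l * u) • S u (y + z)
      = Real.exp (-l * u) • S u y + Real.exp (-l * u) • S u z
    rw [map_add, smul_add]
  have hmap_smul : ∀ (c : ℝ) (y : E),
      (∫ u in Ioi (0:ℝ), f (c • y) u) = c • ∫ u in Ioi (0:ℝ), f y u := by
    intro c y
    rw [← integral_smul]
    refine integral_congr_ae (Eventually.of_forall fun u => ?_)
    show Real.exp (-l * u) • S u (c • y) = c • (Real.exp (-l * u) • S u y)
    rw [(S u).map_smul, smul_comm]
  let Rl : E →ₗ[ℝ] E :=
    { toFun := fun y => ∫ u in Ioi (0:ℝ), f y u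
      map_add' := hmap_add
      map_smul' := hmap_smul }
  have hRlnorm : ∀ y, ‖Rl y‖ ≤ M / l * ‖y‖ := by
    intro y
    have h1 := norm_integral_le_of_norm_le (hexp_int.mul_const (M * ‖y‖))
      (hbound (fun u => S u y) (M * ‖y‖) (fun u hu => hSy_bound y u hu.le))
    have h2 : (∫ u in Ioi (0:ℝ), Real.exp (-l * u) * (M * ‖y‖)) = l⁻¹ * (M * ‖y‖) := by
      rw [integral_mul_const, hexp_val]
    calc ‖Rl y‖ ≤ l⁻¹ * (M * ‖y‖) := h2 ▸ h1
      _ = M / l * ‖y‖ := by field_simp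
  let R : E →L[ℝ] E := Rl.mkContinuous (M / l) hRlnorm
  have hRapp : ∀ y, R y = ∫ u in Ioi (0:ℝ), f y u := fun y => rfl
  -- semigroup applied to the resolvent
  have hkey : ∀ s, 0 ≤ s → ∀ y, S s (R y)
      = ∫ u in Ioi (0:ℝ), Real.exp (-l * u) • S (s + u) y := by
    intro s hs y
    rw [hRapp, ← ContinuousLinearMap.integral_comp_comm (S s) (hfi y)]
    refine integral_congr_ae ?_
    filter_upwards [ae_restrict_mem measurableSet_Ioi] with u hu
    show S s (Real.exp (-l * u) • S u y) = Real.exp (-l * u) • S (s + u) y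
    rw [hSadd s u hs hu.le, ContinuousLinearMap.comp_apply, (S s).map_smul]
  have hnormkey : ∀ (z : E) (C : ℝ), (∀ t, 0 ≤ t → ‖S t z‖ ≤ C) →
      ∀ s, 0 ≤ s → ‖S s (R z)‖ ≤ C / l := by
    intro z C hz s hs
    rw [hkey s hs z]
    have h1 := norm_integral_le_of_norm_le (hexp_int.mul_const C)
      (hbound (fun u => S (s + u) z) C (fun u hu => hz (s + u) (by linarith)))
    have h2 : (∫ u in Ioi (0:ℝ), Real.exp (-l * u) * C) = l⁻¹ * C := by
      rw [integral_mul_const, hexp_val]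
    calc ‖∫ u in Ioi (0:ℝ), Real.exp (-l * u) • S (s + u) z‖ ≤ l⁻¹ * C := h2 ▸ h1
      _ = C / l := by field_simp
  -- iterated norm bound
  have hpow : ∀ (k : ℕ) (y : E) s, 0 ≤ s → ‖S s ((R ^ k) y)‖ ≤ M * ‖y‖ / l ^ k := by
    intro k
    induction k with
    | zero => intro y s hs; simpa using hSy_bound y s hs
    | succ n ih =>
      intro y s hs
      have h1 : (R ^ (n + 1) : E →L[ℝ] E) y = R ((R ^ n : E →L[ℝ] E) y) := by
        rw [pow_succ']; rfl
      rw [h1]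
      have h2 := hnormkey ((R ^ n) y) (M * ‖y‖ / l ^ n) (fun t ht => ih y t ht) s hs
      calc ‖S s (R ((R ^ n) y))‖ ≤ M * ‖y‖ / l ^ n / l := h2
        _ = M * ‖y‖ / l ^ (n + 1) := by rw [pow_succ, div_div]
  have hRnormpow : ∀ k : ℕ, 1 ≤ k → ‖(R ^ k : E →L[ℝ] E)‖ ≤ M / l ^ k := by
    intro k _
    refine ContinuousLinearMap.opNorm_le_bound _ (by positivity) fun y => ?_
    have h := hpow k y 0 le_rfl
    rw [hS0] at h
    simpa [div_mul_eq_mul_div, mul_comm, mul_div_assoc] using h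
  -- shift identity
  have hshift : ∀ s, 0 ≤ s → ∀ y : E,
      (∫ u in Ioi (0:ℝ), Real.exp (-l * u) • S (s + u) y)
        = Real.exp (l * s) • ∫ u in Ioi s, f y u := by
    intro s hs y
    have h1 : ∀ u : ℝ, Real.exp (-l * u) • S (s + u) y
        = Real.exp (l * s) • f y (s + u) := by
      intro u
      show _ = Real.exp (l * s) • (Real.exp (-l * (s + u)) • S (s + u) y)
      rw [smul_smul, ← Real.exp_add]
      congr 2
      ring
    calc (∫ u in Ioi (0:ℝ), Real.exp (-l * u) • S (s + u) y)
        = ∫ u in Ioi (0:ℝ), Real.exp (l * s) • f y (s + u) := by simp_rw [h1]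
      _ = Real.exp (l * s) • ∫ u in Ioi (0:ℝ), f y (s + u) := integral_smul _ _
      _ = Real.exp (l * s) • ∫ u in Ioi s, f y u := by
          congr 1
          rw [← integral_indicator measurableSet_Ioi, ← integral_indicator measurableSet_Ioi]
          have h2 : ∀ u : ℝ, (Ioi (0:ℝ)).indicator (fun u => f y (s + u)) u
              = (Ioi s).indicator (f y) (u + s) := by
            intro u
            by_cases hu : u ∈ Ioi (0:ℝ)
            · rw [indicator_of_mem hu, indicator_of_mem (by simp [mem_Ioi.mp hu]),
                add_comm]
            · rw [indicator_of_notMem hu, indicator_of_notMem (by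
                simp only [mem_Ioi, not_lt] at hu ⊢; linarith)]
          simp_rw [h2]
          exact integral_add_right_eq_self (fun u => (Ioi s).indicator (f y) u) s
  -- splitting identity
  have hsplit : ∀ s, 0 ≤ s → ∀ y : E,
      (∫ u in Ioi s, f y u) = R y - ∫ u in Ioc 0 s, f y u := by
    intro s hs y
    have h0 : (∫ u in Ioi (0:ℝ), f y u)
        = (∫ u in Ioc 0 s, f y u) + ∫ u in Ioi s, f y u := by
      rw [← setIntegral_union (Ioc_disjoint_Ioi le_rfl) measurableSet_Ioi
        ((hfi y).mono_set Ioc_subset_Ioi_self) ((hfi y).mono_set (Ioi_subset_Ioi hs)),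
        Ioc_union_Ioi_eq_Ioi hs]
    rw [hRapp, h0]
    abel
  -- the resolvent lands in the domain
  have hgenR : ∀ y : E, R y ∈ D ∧ A (R y) = l • R y - y := by
    intro y
    have hI : HasDerivWithinAt (fun t => ∫ u in (0:ℝ)..t, f y u) y (Ici 0) 0 := by
      have hm : StronglyMeasurableAtFilter (f y) (𝓝[>] (0:ℝ)) volume :=
        ((hfc y).mono Ioi_subset_Ici_self).stronglyMeasurableAtFilter_nhdsWithin
          measurableSet_Ioi 0
      have hcw : ContinuousWithinAt (f y) (Ioi 0) 0 :=
        ((hfc y).continuousWithinAt self_mem_Ici).mono Ioi_subset_Ici_self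
      have hii : IntervalIntegrable (f y) volume 0 0 := IntervalIntegrable.refl
      have h : HasDerivWithinAt (fun u => ∫ x in (0:ℝ)..u, f y x) (f y 0) (Ici 0) 0 :=
        intervalIntegral.integral_hasDerivWithinAt_right hii hm hcw
      have : f y 0 = y := by
        show Real.exp (-l * 0) • S 0 y = y
        simp [hS0]
      rwa [this] at h
    have hslope : Tendsto (fun t : ℝ => t⁻¹ • ∫ u in (0:ℝ)..t, f y u) (𝓝[>] 0) (𝓝 y) := by
      rw [hasDerivWithinAt_iff_tendsto_slope, Ici_sdiff_left] at hI
      refine hI.congr' ?_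
      filter_upwards [self_mem_nhdsWithin] with t _
      rw [slope_def_module]
      simp
    have hexp_slope : Tendsto (fun t : ℝ => t⁻¹ * (Real.exp (l * t) - 1)) (𝓝[>] 0) (𝓝 l) := by
      have hd : HasDerivAt (fun t : ℝ => Real.exp (l * t)) l 0 := by
        have h1 : HasDerivAt (fun t : ℝ => l * t) l 0 := by
          simpa using (hasDerivAt_id (0:ℝ)).const_mul l
        have h2 := (Real.hasDerivAt_exp (l * 0)).comp 0 h1
        simp only [mul_zero, Real.exp_zero, one_mul] at h2
        exact h2
      rw [hasDerivAt_iff_tendsto_slope] at hd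
      refine (hd.mono_left (nhdsWithin_mono _ fun t ht => ?_)).congr' ?_
      · exact fun h => absurd h (ne_of_gt ht)
      · filter_upwards [self_mem_nhdsWithin] with t _
        rw [slope_def_module]
        simp [smul_eq_mul]
    have hexp1 : Tendsto (fun t : ℝ => Real.exp (l * t)) (𝓝[>] 0) (𝓝 1) := by
      have hc : Continuous fun t : ℝ => Real.exp (l * t) :=
        Real.continuous_exp.comp (continuous_const.mul continuous_id)
      have h0 := hc.tendsto 0
      rw [mul_zero, Real.exp_zero] at h0
      exact h0.mono_left nhdsWithin_le_nhds
    have hmain : Tendsto (fun t : ℝ => t⁻¹ • (S t (R y) - R y)) (𝓝[>] 0)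
        (𝓝 (l • R y - y)) := by
      have hcomb := (hexp_slope.smul (tendsto_const_nhds (x := R y))).sub (hexp1.smul hslope)
      rw [one_smul] at hcomb
      refine Tendsto.congr' ?_ hcomb
      filter_upwards [self_mem_nhdsWithin] with t ht
      have hS : S t (R y) = Real.exp (l * t) • (R y - ∫ u in (0:ℝ)..t, f y u) := by
        rw [hkey t (le_of_lt ht) y, hshift t (le_of_lt ht) y, hsplit t (le_of_lt ht) y,
          intervalIntegral.integral_of_le (le_of_lt ht)]
      rw [hS]
      module
    exact ((hgen (R y) (l • R y - y)).mpr hmain)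
  -- left inverse on the domain
  have hinj : ∀ x ∈ D, R (l • x - A x) = x := by
    intro x hx
    set y := l • x - A x with hy
    have hAx : Tendsto (fun t : ℝ => t⁻¹ • (S t x - x)) (𝓝[>] 0) (𝓝 (A x)) :=
      (hgen x (A x)).mp ⟨hx, rfl⟩
    have hDeriv : ∀ t, 0 ≤ t → HasDerivWithinAt (fun u => S u x) (S t (A x)) (Ici t) t := by
      intro t ht
      rw [hasDerivWithinAt_iff_tendsto_slope, Ici_sdiff_left]
      have hmaps : Tendsto (fun s : ℝ => s - t) (𝓝[Ioi t] t) (𝓝[>] 0) := by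
        refine tendsto_nhdsWithin_of_tendsto_nhds_of_eventually_within _ ?_ ?_
        · have h0 : Tendsto (fun s : ℝ => s - t) (𝓝 t) (𝓝 (t - t)) :=
            (continuous_id.sub continuous_const).tendsto t
          rw [sub_self] at h0
          exact h0.mono_left nhdsWithin_le_nhds
        · filter_upwards [self_mem_nhdsWithin] with s hs
          exact sub_pos.mpr (mem_Ioi.mp hs)
      have hcomp := ((S t).continuous.tendsto (A x)).comp (hAx.comp hmaps)
      refine hcomp.congr' ?_
      filter_upwards [self_mem_nhdsWithin] with s hs
      have hst : t + (s - t) = s := by ring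
      have h2 : S s x = S t (S (s - t) x) := by
        conv_lhs => rw [← hst]
        rw [hSadd t (s - t) ht (by linarith [mem_Ioi.mp hs])]
        rfl
      show S t ((s - t)⁻¹ • (S (s - t) x - x)) = slope (fun u => S u x) t s
      rw [slope_def_module, h2, ← (S t).map_sub, ← (S t).map_smul]
    set I : ℝ → E := fun t => ∫ u in (0:ℝ)..t, f y u with hIdef
    set g : ℝ → E := fun t => Real.exp (-l * t) • S t x + I t with hgdef
    have hg0 : g 0 = x := by
      show Real.exp (-l * 0) • S 0 x + (∫ u in (0:ℝ)..(0:ℝ), f y u) = x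
      simp [hS0]
    have hIderiv : ∀ t, 0 ≤ t → HasDerivWithinAt I (f y t) (Ici t) t := by
      intro t ht
      have hii : IntervalIntegrable (f y) volume 0 t := by
        apply ContinuousOn.intervalIntegrable
        apply (hfc y).mono
        rw [uIcc_of_le ht]
        exact Icc_subset_Ici_self
      have hm : StronglyMeasurableAtFilter (f y) (𝓝[>] t) volume :=
        ((hfc y).mono (fun u hu => le_trans ht (le_of_lt hu))).stronglyMeasurableAtFilter_nhdsWithin
          measurableSet_Ioi t
      have hcw : ContinuousWithinAt (f y) (Ioi t) t :=
        ((hfc y).continuousWithinAt (mem_Ici.mpr ht)).mono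
          (fun u hu => le_trans ht (le_of_lt hu))
      have h : HasDerivWithinAt (fun u => ∫ v in (0:ℝ)..u, f y v) (f y t) (Ici t) t :=
        intervalIntegral.integral_hasDerivWithinAt_right hii hm hcw
      exact h
    have hgderiv : ∀ t, 0 ≤ t → HasDerivWithinAt g 0 (Ici t) t := by
      intro t ht
      have h1 : HasDerivWithinAt (fun u : ℝ => Real.exp (-l * u))
          (-l * Real.exp (-l * t)) (Ici t) t := by
        have ha : HasDerivAt (fun u : ℝ => -l * u) (-l) t := by
          simpa using (hasDerivAt_id t).const_mul (-l)
        have hb := (Real.hasDerivAt_exp (-l * t)).comp t ha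
        rw [mul_comm] at hb
        exact hb.hasDerivWithinAt
      have h2 := (h1.smul (hDeriv t ht)).add (hIderiv t ht)
      convert h2 using 1
      show (0:E) = Real.exp (-l * t) • S t (A x) + (-l * Real.exp (-l * t)) • S t x + f y t
      have hy' : f y t = Real.exp (-l * t) • (l • S t x - S t (A x)) := by
        show Real.exp (-l * t) • S t (l • x - A x) = _
        rw [(S t).map_sub, (S t).map_smul]
      rw [hy']
      module
      rfl
    have hconst : ∀ T, 0 ≤ T → g T = x := by
      intro T hT
      have hcont : ContinuousOn g (Icc 0 T) := by
        have hc1 : ContinuousOn (fun t => Real.exp (-l * t) • S t x) (Icc 0 T) :=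
          (hexp_cont.continuousOn.smul (hScont x)).mono Icc_subset_Ici_self
        have hc2 : ContinuousOn I (Icc 0 T) := by
          have hint : IntegrableOn (f y) (Icc 0 T) volume :=
            ((hfc y).mono Icc_subset_Ici_self).integrableOn_compact isCompact_Icc
          refine (intervalIntegral.continuousOn_primitive hint).congr fun t htmem => ?_
          show I t = ∫ u in Ioc 0 t, f y u
          rw [hIdef]
          exact intervalIntegral.integral_of_le htmem.1
        exact hc1.add hc2
      have hb := norm_image_sub_le_of_norm_deriv_right_le_segment (C := 0) hcont
        (fun t htmem => hgderiv t htmem.1) (fun t _ => by simp) T (right_mem_Icc.mpr hT)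
      rw [hg0] at hb
      have h0 : ‖g T - x‖ ≤ 0 := by simpa using hb
      have := norm_le_zero_iff.mp h0
      exact sub_eq_zero.mp this
    have hlim1 : Tendsto (fun T => Real.exp (-l * T) • S T x) atTop (𝓝 (0:E)) := by
      have hev : ∀ᶠ T in atTop, ‖Real.exp (-l * T) • S T x‖ ≤ M * ‖x‖ * Real.exp (-l * T) := by
        filter_upwards [eventually_ge_atTop (0:ℝ)] with T hT
        rw [norm_smul, Real.norm_eq_abs, abs_of_pos (Real.exp_pos _)]
        calc Real.exp (-l*T) * ‖S T x‖ ≤ Real.exp (-l*T) * (M * ‖x‖) :=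
              mul_le_mul_of_nonneg_left (hSy_bound x T hT) (Real.exp_pos _).le
          _ = M * ‖x‖ * Real.exp (-l * T) := by ring
      have hto : Tendsto (fun T : ℝ => Real.exp (-l * T)) atTop (𝓝 0) :=
        Real.tendsto_exp_atBot.comp
          ((tendsto_const_mul_atBot_of_neg (neg_lt_zero.mpr hl)).mpr tendsto_id)
      exact squeeze_zero_norm' hev (by simpa using hto.const_mul (M * ‖x‖))
    have hlim2 : Tendsto I atTop (𝓝 (R y)) := by
      rw [hRapp]
      exact intervalIntegral_tendsto_integral_Ioi 0 (hfi y) tendsto_id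
    have hgl : Tendsto g atTop (𝓝 (0 + R y)) := hlim1.add hlim2
    have hgc : Tendsto g atTop (𝓝 x) := by
      refine Tendsto.congr' ?_ tendsto_const_nhds
      filter_upwards [eventually_ge_atTop (0:ℝ)] with T hT
      exact (hconst T hT).symm
    have hux := tendsto_nhds_unique hgc hgl
    rw [zero_add] at hux
    exact hux.symm
  refine ⟨R, hinj, fun y => ?_, hRnormpow⟩
  obtain ⟨h1, h2⟩ := hgenR y
  exact ⟨h1, by rw [h2, sub_sub_cancel]⟩
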